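/- arXiv:math/0405003 — 2 statements merged into one kernel-verified Lean document; each statement's English description precedes it below -/
import Mathlib

section
/- Let τ : ℝ → ℝ be a cutoff reparameterization and n ≥ 1. Define φ_τ(f)(t) = τ′(t) · f(τ(t)) for f : ℝ → ℝⁿ. Then: (i) φ_τ is linear in f; (ii) if f is C¹ on [0,1], then φ_τ(f) is C¹ on [0,1], with derivative τ″(t) f(τ(t)) + τ′(t)² f′(τ(t)), and φ_τ(f) satisfies the A₀-boundary conditions, i.e. φ_τ(f)(0) = φ_τ(f)(1) = 0 and (φ_τ f)′(0) = (φ_τ f)′(1) = 0; (iii) there is a constant C > 0 (depending only on τ) such that ‖φ_τ(f)‖_{C¹} ≤ C ‖f‖_{C¹} for all f that are C¹ on [0,1]; (iv) φ_τ is injective on continuous functions: if f is continuous on [0,1] and τ′(t) f(τ(t)) = 0 for all t ∈ [0,1], then f = 0 on [0,1]. -/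
open Set

set_option linter.unusedSectionVars false

lemma aux_left {E : Type*} [NormedAddCommGroup E] [NormedSpace ℝ E]
    (g : ℝ → E) (c : E) (a : ℝ) (hd : DifferentiableAt ℝ g a)
    (h : ∀ t ≤ a, g t = c) : deriv g a = 0 := by
  have h1 : HasDerivWithinAt g 0 (Iic a) a :=
    (hasDerivWithinAt_const a (Iic a) c).congr (fun y hy => h y hy) (h a le_rfl)
  have h2 : HasDerivWithinAt g (deriv g a) (Iic a) a := hd.hasDerivAt.hasDerivWithinAt
  have hu : UniqueDiffWithinAt ℝ (Iic a) a := uniqueDiffOn_Iic a a (mem_Iic.2 le_rfl)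
  rw [← h1.derivWithin hu, ← h2.derivWithin hu]

lemma aux_right {E : Type*} [NormedAddCommGroup E] [NormedSpace ℝ E]
    (g : ℝ → E) (c : E) (a : ℝ) (hd : DifferentiableAt ℝ g a)
    (h : ∀ t, a ≤ t → g t = c) : deriv g a = 0 := by
  have h1 : HasDerivWithinAt g 0 (Ici a) a :=
    (hasDerivWithinAt_const a (Ici a) c).congr (fun y hy => h y hy) (h a le_rfl)
  have h2 : HasDerivWithinAt g (deriv g a) (Ici a) a := hd.hasDerivAt.hasDerivWithinAt
  have hu : UniqueDiffWithinAt ℝ (Ici a) a := uniqueDiffOn_Ici a a (mem_Ici.2 le_rfl)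
  rw [← h1.derivWithin hu, ← h2.derivWithin hu]

section
variable (τ : ℝ → ℝ)
  (hτ : ContDiff ℝ (⊤ : ℕ∞) τ)
  (hτ0 : ∀ t : ℝ, t ≤ 0 → τ t = 0)
  (hτ1 : ∀ t : ℝ, 1 ≤ t → τ t = 1)
  (hτ' : ∀ t ∈ Ioo (0:ℝ) 1, 0 < deriv τ t)
include hτ hτ0 hτ1

lemma deriv_tau_zero_left : ∀ t ≤ (0:ℝ), deriv τ t = 0 := by
  intro t ht
  rcases eq_or_lt_of_le ht with rfl | hlt
  · exact aux_left τ 0 0 (hτ.differentiable (by simp) 0) hτ0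
  · have : τ =ᶠ[nhds t] fun _ => 0 := by
      filter_upwards [Iio_mem_nhds hlt] with s hs using hτ0 s (le_of_lt hs)
    rw [this.deriv_eq]; simp

lemma deriv_tau_zero_right : ∀ t, (1:ℝ) ≤ t → deriv τ t = 0 := by
  intro t ht
  rcases eq_or_lt_of_le ht with rfl | hlt
  · exact aux_right τ 1 1 (hτ.differentiable (by simp) 1) hτ1
  · have : τ =ᶠ[nhds t] fun _ => 1 := by
      filter_upwards [Ioi_mem_nhds hlt] with s hs using hτ1 s (le_of_lt hs)
    rw [this.deriv_eq]; simp

lemma deriv2_tau_zero_left : deriv (deriv τ) 0 = 0 :=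
  aux_left (deriv τ) 0 0
    (((contDiff_infty_iff_deriv.mp hτ).2.differentiable (by simp) 0))
    (deriv_tau_zero_left τ hτ hτ0 hτ1)

lemma deriv2_tau_zero_right : deriv (deriv τ) 1 = 0 :=
  aux_right (deriv τ) 0 1
    (((contDiff_infty_iff_deriv.mp hτ).2.differentiable (by simp) 1))
    (deriv_tau_zero_right τ hτ hτ0 hτ1)

include hτ' in
lemma tau_mapsTo : MapsTo τ (Icc (0:ℝ) 1) (Icc (0:ℝ) 1) := by
  have hmono : MonotoneOn τ (Icc (0:ℝ) 1) := by
    have := strictMonoOn_of_deriv_pos (convex_Icc (0:ℝ) 1) (hτ.continuous.continuousOn)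
      (by rwa [interior_Icc])
    exact this.monotoneOn
  intro t ht
  constructor
  · have := hmono (left_mem_Icc.2 one_pos.le) ht ht.1
    rwa [hτ0 0 le_rfl] at this
  · have := hmono ht (right_mem_Icc.2 one_pos.le) ht.2
    rwa [hτ1 1 le_rfl] at this
end


noncomputable section

/-- The reparameterization operator `φ_τ(f)(t) = τ′(t) • f(τ(t))`. -/
def phiTau {n : ℕ} (τ : ℝ → ℝ) (f : ℝ → EuclideanSpace ℝ (Fin n)) :
    ℝ → EuclideanSpace ℝ (Fin n) :=
  fun t => deriv τ t • f (τ t)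

/-- The derivative of `φ_τ(f)`: `τ″(t) f(τ(t)) + τ′(t)² f′(τ(t))`. -/
def phiTauDeriv {n : ℕ} (τ : ℝ → ℝ) (f f' : ℝ → EuclideanSpace ℝ (Fin n)) :
    ℝ → EuclideanSpace ℝ (Fin n) :=
  fun t => deriv (deriv τ) t • f (τ t) + ((deriv τ t) ^ 2) • f' (τ t)

/-- The C¹-norm `‖f‖_{C¹} = sup_{[0,1]} ‖f‖ + sup_{[0,1]} ‖f′‖` (with `f'` the derivative
data of `f`). -/
def c1Norm {n : ℕ} (f f' : ℝ → EuclideanSpace ℝ (Fin n)) : ℝ :=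
  (⨆ t : Icc (0:ℝ) 1, ‖f (t:ℝ)‖) + (⨆ t : Icc (0:ℝ) 1, ‖f' (t:ℝ)‖)

/-- Properties of `φ_τ`: linearity; it sends C¹ functions on `[0,1]` to C¹ functions
satisfying the A₀-boundary conditions, with the stated derivative; it is bounded for the
C¹-norms; and it is injective on continuous functions. -/
theorem phiTau_properties (n : ℕ) (hn : 1 ≤ n) (τ : ℝ → ℝ)
    (hτ : ContDiff ℝ (⊤ : ℕ∞) τ)
    (hτ0 : ∀ t : ℝ, t ≤ 0 → τ t = 0)
    (hτ1 : ∀ t : ℝ, 1 ≤ t → τ t = 1)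
    (hτ' : ∀ t ∈ Ioo (0:ℝ) 1, 0 < deriv τ t) :
    -- (i) linearity
    (∀ (f g : ℝ → EuclideanSpace ℝ (Fin n)) (c d : ℝ) (t : ℝ),
      phiTau τ (fun s => c • f s + d • g s) t = c • phiTau τ f t + d • phiTau τ g t) ∧
    -- (ii) φ_τ(f) is C¹ with the stated derivative, and satisfies the A₀-boundary conditions
    (∀ (f f' : ℝ → EuclideanSpace ℝ (Fin n)),
      (∀ t ∈ Icc (0:ℝ) 1, HasDerivWithinAt f (f' t) (Icc (0:ℝ) 1) t) →
      ContinuousOn f' (Icc (0:ℝ) 1) →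
      (∀ t ∈ Icc (0:ℝ) 1,
        HasDerivWithinAt (phiTau τ f) (phiTauDeriv τ f f' t) (Icc (0:ℝ) 1) t) ∧
      ContinuousOn (phiTauDeriv τ f f') (Icc (0:ℝ) 1) ∧
      phiTau τ f 0 = 0 ∧ phiTau τ f 1 = 0 ∧
      phiTauDeriv τ f f' 0 = 0 ∧ phiTauDeriv τ f f' 1 = 0) ∧
    -- (iii) boundedness for the C¹-norms
    (∃ C > (0:ℝ), ∀ (f f' : ℝ → EuclideanSpace ℝ (Fin n)),
      (∀ t ∈ Icc (0:ℝ) 1, HasDerivWithinAt f (f' t) (Icc (0:ℝ) 1) t) →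
      ContinuousOn f' (Icc (0:ℝ) 1) →
      c1Norm (phiTau τ f) (phiTauDeriv τ f f') ≤ C * c1Norm f f') ∧
    -- (iv) injectivity on continuous functions
    (∀ f : ℝ → EuclideanSpace ℝ (Fin n), ContinuousOn f (Icc (0:ℝ) 1) →
      (∀ t ∈ Icc (0:ℝ) 1, phiTau τ f t = 0) → ∀ t ∈ Icc (0:ℝ) 1, f t = 0) := by
  have hdτ : Differentiable ℝ τ := hτ.differentiable (by simp)
  have hτd : ContDiff ℝ (⊤ : ℕ∞) (deriv τ) := (contDiff_infty_iff_deriv.mp hτ).2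
  have hddτ : Differentiable ℝ (deriv τ) := hτd.differentiable (by simp)
  have hcτ' : Continuous (deriv τ) := hτd.continuous
  have hcτ'' : Continuous (deriv (deriv τ)) := (contDiff_infty_iff_deriv.mp hτd).2.continuous
  have hmaps : MapsTo τ (Icc (0:ℝ) 1) (Icc (0:ℝ) 1) := tau_mapsTo τ hτ hτ0 hτ1 hτ'
  have hd0 : deriv τ 0 = 0 := deriv_tau_zero_left τ hτ hτ0 hτ1 0 le_rfl
  have hd1 : deriv τ 1 = 0 := deriv_tau_zero_right τ hτ hτ0 hτ1 1 le_rfl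
  have hdd0 : deriv (deriv τ) 0 = 0 := deriv2_tau_zero_left τ hτ hτ0 hτ1
  have hdd1 : deriv (deriv τ) 1 = 0 := deriv2_tau_zero_right τ hτ hτ0 hτ1
  haveI : Nonempty (Icc (0:ℝ) 1) := ⟨⟨0, by norm_num⟩⟩
  refine ⟨?_, ?_, ?_, ?_⟩
  · intro f g c d t
    simp [phiTau, smul_add, smul_comm (deriv τ t)]
  · -- part (ii)
    intro f f' hf hf'c
    have hfc : ContinuousOn f (Icc (0:ℝ) 1) := fun t ht =>
      (hf t ht).differentiableWithinAt.continuousWithinAt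
    refine ⟨?_, ?_, ?_, ?_, ?_, ?_⟩
    · intro t ht
      have h1 : HasDerivAt τ (deriv τ t) t := (hdτ t).hasDerivAt
      have h3 : HasDerivWithinAt (f ∘ τ) (deriv τ t • f' (τ t)) (Icc (0:ℝ) 1) t :=
        (hf (τ t) (hmaps ht)).scomp t h1.hasDerivWithinAt hmaps
      have h4 : HasDerivAt (deriv τ) (deriv (deriv τ) t) t := (hddτ t).hasDerivAt
      have h5 := h4.hasDerivWithinAt.smul h3
      have : phiTauDeriv τ f f' t =
          deriv τ t • (deriv τ t • f' (τ t)) + deriv (deriv τ) t • (f ∘ τ) t := by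
        simp [phiTauDeriv, Function.comp, smul_smul, sq, add_comm]
      rw [show phiTau τ f = fun y => deriv τ y • (f ∘ τ) y from rfl, this]
      exact h5
    · exact ((hcτ''.continuousOn.smul (hfc.comp hτ.continuous.continuousOn hmaps)).add
        ((hcτ'.pow 2).continuousOn.smul (hf'c.comp hτ.continuous.continuousOn hmaps)))
    · simp [phiTau, hd0]
    · simp [phiTau, hd1]
    · simp [phiTauDeriv, hd0, hdd0]
    · simp [phiTauDeriv, hd1, hdd1]
  · -- part (iii)
    obtain ⟨M1, hM1⟩ := isCompact_Icc.exists_bound_of_continuousOn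
      (hcτ'.continuousOn : ContinuousOn (deriv τ) (Icc (0:ℝ) 1))
    obtain ⟨M2, hM2⟩ := isCompact_Icc.exists_bound_of_continuousOn
      (hcτ''.continuousOn : ContinuousOn (deriv (deriv τ)) (Icc (0:ℝ) 1))
    set M : ℝ := max (max M1 M2) 0 with hM
    have hM0 : 0 ≤ M := le_max_right _ _
    have hbτ' : ∀ t ∈ Icc (0:ℝ) 1, |deriv τ t| ≤ M := fun t ht =>
      le_trans (hM1 t ht) (le_max_of_le_left (le_max_left _ _))
    have hbτ'' : ∀ t ∈ Icc (0:ℝ) 1, |deriv (deriv τ) t| ≤ M := fun t ht =>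
      le_trans (hM2 t ht) (le_max_of_le_left (le_max_right _ _))
    refine ⟨2 * (M ^ 2 + M + 1), by positivity, ?_⟩
    intro f f' hf hf'c
    have hfc : ContinuousOn f (Icc (0:ℝ) 1) := fun t ht =>
      (hf t ht).differentiableWithinAt.continuousWithinAt
    obtain ⟨F, hF⟩ := isCompact_Icc.exists_bound_of_continuousOn hfc
    obtain ⟨F', hF'⟩ := isCompact_Icc.exists_bound_of_continuousOn hf'c
    set A : ℝ := ⨆ t : Icc (0:ℝ) 1, ‖f (t:ℝ)‖ with hA
    set B : ℝ := ⨆ t : Icc (0:ℝ) 1, ‖f' (t:ℝ)‖ with hB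
    have hbddA : BddAbove (range fun t : Icc (0:ℝ) 1 => ‖f (t:ℝ)‖) :=
      ⟨F, by rintro x ⟨t, rfl⟩; exact hF t t.2⟩
    have hbddB : BddAbove (range fun t : Icc (0:ℝ) 1 => ‖f' (t:ℝ)‖) :=
      ⟨F', by rintro x ⟨t, rfl⟩; exact hF' t t.2⟩
    have hA_le : ∀ t ∈ Icc (0:ℝ) 1, ‖f t‖ ≤ A := fun t ht => le_ciSup hbddA ⟨t, ht⟩
    have hB_le : ∀ t ∈ Icc (0:ℝ) 1, ‖f' t‖ ≤ B := fun t ht => le_ciSup hbddB ⟨t, ht⟩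
    have hA0 : 0 ≤ A := le_trans (norm_nonneg _) (hA_le 0 ⟨le_rfl, zero_le_one⟩)
    have hB0 : 0 ≤ B := le_trans (norm_nonneg _) (hB_le 0 ⟨le_rfl, zero_le_one⟩)
    have hsup1 : (⨆ t : Icc (0:ℝ) 1, ‖phiTau τ f (t:ℝ)‖) ≤ M * A := by
      refine ciSup_le fun t => ?_
      have : ‖phiTau τ f (t:ℝ)‖ = |deriv τ (t:ℝ)| * ‖f (τ (t:ℝ))‖ := by
        simp [phiTau, norm_smul, Real.norm_eq_abs]
      rw [this]
      exact mul_le_mul (hbτ' t t.2) (hA_le _ (hmaps t.2)) (norm_nonneg _) hM0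
    have hsup2 : (⨆ t : Icc (0:ℝ) 1, ‖phiTauDeriv τ f f' (t:ℝ)‖) ≤ M * A + M ^ 2 * B := by
      refine ciSup_le fun t => ?_
      have h1 : ‖phiTauDeriv τ f f' (t:ℝ)‖ ≤
          |deriv (deriv τ) (t:ℝ)| * ‖f (τ (t:ℝ))‖ + |(deriv τ (t:ℝ)) ^ 2| * ‖f' (τ (t:ℝ))‖ := by
        refine le_trans (norm_add_le _ _) ?_
        simp [norm_smul, Real.norm_eq_abs]
      refine le_trans h1 (add_le_add ?_ ?_)
      · exact mul_le_mul (hbτ'' t t.2) (hA_le _ (hmaps t.2)) (norm_nonneg _) hM0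
      · have h2 : |(deriv τ (t:ℝ)) ^ 2| ≤ M ^ 2 := by
          rw [abs_pow]
          exact pow_le_pow_left₀ (abs_nonneg _) (hbτ' t t.2) 2
        exact mul_le_mul h2 (hB_le _ (hmaps t.2)) (norm_nonneg _) (by positivity)
    have : c1Norm (phiTau τ f) (phiTauDeriv τ f f') ≤ M * A + (M * A + M ^ 2 * B) :=
      add_le_add hsup1 hsup2
    refine le_trans this ?_
    have hc1 : c1Norm f f' = A + B := rfl
    rw [hc1]
    nlinarith [sq_nonneg M, mul_nonneg hM0 hA0, mul_nonneg hM0 hB0]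
  · -- part (iv)
    intro f hfc hzero
    have hev : ∀ s ∈ Ioo (0:ℝ) 1, f s = 0 := by
      intro s hs
      have himg : s ∈ τ '' Icc (0:ℝ) 1 := by
        apply intermediate_value_Icc zero_le_one hτ.continuous.continuousOn
        rw [hτ0 0 le_rfl, hτ1 1 le_rfl]
        exact ⟨hs.1.le, hs.2.le⟩
      obtain ⟨u, hu, huτ⟩ := himg
      have hune : u ∈ Ioo (0:ℝ) 1 := by
        constructor
        · rcases lt_or_eq_of_le hu.1 with h | h
          · exact h
          · exfalso; rw [← h, hτ0 0 le_rfl] at huτ; exact hs.1.ne huτ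
        · rcases lt_or_eq_of_le hu.2 with h | h
          · exact h
          · exfalso; rw [h, hτ1 1 le_rfl] at huτ; exact hs.2.ne' huτ
      have h0 := hzero u (Ioo_subset_Icc_self hune)
      rw [phiTau, huτ] at h0
      have := hτ' u hune
      rcases smul_eq_zero.mp h0 with h | h
      · exact absurd h this.ne'
      · exact h
    have hend : ∀ a ∈ ({0, 1} : Set ℝ), a ∈ Icc (0:ℝ) 1 → f a = 0 := by
      intro a _ ha
      have hne : (nhdsWithin a (Ioo (0:ℝ) 1)).NeBot := by
        refine mem_closure_iff_nhdsWithin_neBot.mp ?_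
        rw [closure_Ioo (by norm_num : (0:ℝ) ≠ 1)]
        exact ha
      have h1 : Filter.Tendsto f (nhdsWithin a (Ioo (0:ℝ) 1)) (nhds (f a)) :=
        ((hfc a ha).mono Ioo_subset_Icc_self)
      have h2 : Filter.Tendsto f (nhdsWithin a (Ioo (0:ℝ) 1)) (nhds 0) := by
        refine Filter.Tendsto.congr' ?_ tendsto_const_nhds
        filter_upwards [self_mem_nhdsWithin] with s hs using (hev s hs).symm
      exact tendsto_nhds_unique h1 h2
    intro t ht
    rcases eq_or_lt_of_le ht.1 with h0' | h0'
    · rw [← h0']; exact hend 0 (by simp) (by rw [h0'] at ht ⊢; exact ht)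
    rcases eq_or_lt_of_le ht.2 with h1' | h1'
    · rw [h1']; exact hend 1 (by simp) (by rw [← h1'] at ht ⊢; exact ht)
    · exact hev t ⟨h0', h1'⟩
end
end

section
/- Let ρ : ℝᵐ → (ℝⁿ →L ℝᵐ) be continuous. Let (a₀, γ₀) and (a₁, γ₁) be such that aᵢ : [0,1] → ℝⁿ are continuous with a₀(1) = 0 and a₁(0) = 0, γᵢ : [0,1] → ℝᵐ are C¹ on [0,1] with γᵢ′(t) = ρ(γᵢ(t))(aᵢ(t)) for all t ∈ [0,1], and γ₀(1) = γ₁(0). Define γ(t) = γ₀(2t) for t ≤ 1/2 and γ(t) = γ₁(2t−1) for t > 1/2. Then γ is C¹ on [0,1] and γ′(t) = ρ(γ(t))((a₁ ⊙ a₀)(t)) for all t ∈ [0,1]. -/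
open Set

noncomputable section

/-- The concatenation `a₁ ⊙ a₀`: `(a₁ ⊙ a₀)(t) = 2·a₀(2t)` if `t ≤ 1/2` and
`(a₁ ⊙ a₀)(t) = 2·a₁(2t−1)` if `t > 1/2`. -/
def odot {n : ℕ} (a₁ a₀ : ℝ → EuclideanSpace ℝ (Fin n)) : ℝ → EuclideanSpace ℝ (Fin n) :=
  fun t => if t ≤ 1/2 then (2:ℝ) • a₀ (2*t) else (2:ℝ) • a₁ (2*t - 1)

/-- The concatenation of the base paths: `γ(t) = γ₀(2t)` for `t ≤ 1/2`, `γ(t) = γ₁(2t−1)`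
for `t > 1/2`. -/
def baseConcat {m : ℕ} (γ₀ γ₁ : ℝ → EuclideanSpace ℝ (Fin m)) :
    ℝ → EuclideanSpace ℝ (Fin m) :=
  fun t => if t ≤ 1/2 then γ₀ (2*t) else γ₁ (2*t - 1)

/-- The concatenation of two composable A-paths (whose fibre components vanish at the
matching endpoints) is an A-path whose base path is the concatenation of the base paths:
`γ` is C¹ on `[0,1]` and `γ′(t) = ρ(γ(t))((a₁ ⊙ a₀)(t))`. -/
theorem concat_of_apaths (m n : ℕ)
    (ρ : EuclideanSpace ℝ (Fin m) → EuclideanSpace ℝ (Fin n) →L[ℝ] EuclideanSpace ℝ (Fin m))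
    (hρ : Continuous ρ)
    (a₀ a₁ : ℝ → EuclideanSpace ℝ (Fin n))
    (ha₀ : ContinuousOn a₀ (Icc (0:ℝ) 1)) (ha₁ : ContinuousOn a₁ (Icc (0:ℝ) 1))
    (h₀1 : a₀ 1 = 0) (h₁0 : a₁ 0 = 0)
    (γ₀ γ₁ : ℝ → EuclideanSpace ℝ (Fin m))
    (hγ₀ : ∀ t ∈ Icc (0:ℝ) 1, HasDerivWithinAt γ₀ (ρ (γ₀ t) (a₀ t)) (Icc (0:ℝ) 1) t)
    (hγ₁ : ∀ t ∈ Icc (0:ℝ) 1, HasDerivWithinAt γ₁ (ρ (γ₁ t) (a₁ t)) (Icc (0:ℝ) 1) t)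
    (hmatch : γ₀ 1 = γ₁ 0) :
    (∀ t ∈ Icc (0:ℝ) 1,
      HasDerivWithinAt (baseConcat γ₀ γ₁)
        (ρ (baseConcat γ₀ γ₁ t) (odot a₁ a₀ t)) (Icc (0:ℝ) 1) t) ∧
    ContinuousOn (fun t => ρ (baseConcat γ₀ γ₁ t) (odot a₁ a₀ t)) (Icc (0:ℝ) 1) := by
  have hd2 : ∀ t : ℝ, HasDerivAt (fun s : ℝ => 2*s) 2 t := fun t => by
    simpa using (hasDerivAt_id t).const_mul (2:ℝ)
  have hd2' : ∀ t : ℝ, HasDerivAt (fun s : ℝ => 2*s - 1) 2 t := fun t =>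
    (hd2 t).sub_const 1
  have maps₀ : MapsTo (fun s : ℝ => 2*s) (Icc (0:ℝ) (1/2)) (Icc (0:ℝ) 1) := by
    intro s hs
    simp only [mem_Icc] at hs ⊢
    constructor <;> linarith
  have maps₁ : MapsTo (fun s : ℝ => 2*s - 1) (Icc (1/2:ℝ) 1) (Icc (0:ℝ) 1) := by
    intro s hs
    simp only [mem_Icc] at hs ⊢
    constructor <;> linarith
  -- the left piece: derivative of baseConcat on [0,1/2]
  have left : ∀ t ∈ Icc (0:ℝ) (1/2),
      HasDerivWithinAt (baseConcat γ₀ γ₁) ((2:ℝ) • ρ (γ₀ (2*t)) (a₀ (2*t)))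
        (Icc (0:ℝ) (1/2)) t := by
    intro t ht
    have h2t : 2*t ∈ Icc (0:ℝ) 1 := maps₀ ht
    have step : HasDerivWithinAt (fun s => γ₀ (2*s))
        ((2:ℝ) • ρ (γ₀ (2*t)) (a₀ (2*t))) (Icc (0:ℝ) (1/2)) t :=
      (hγ₀ (2*t) h2t).scomp t ((hd2 t).hasDerivWithinAt) maps₀
    have key : ∀ s ∈ Icc (0:ℝ) (1/2), baseConcat γ₀ γ₁ s = γ₀ (2*s) := by
      intro s hs
      simp only [baseConcat]
      rw [if_pos hs.2]
    exact step.congr key (key t ht)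
  -- the right piece: derivative of baseConcat on [1/2,1]
  have right : ∀ t ∈ Icc (1/2:ℝ) 1,
      HasDerivWithinAt (baseConcat γ₀ γ₁) ((2:ℝ) • ρ (γ₁ (2*t - 1)) (a₁ (2*t - 1)))
        (Icc (1/2:ℝ) 1) t := by
    intro t ht
    have h2t : 2*t - 1 ∈ Icc (0:ℝ) 1 := maps₁ ht
    have step : HasDerivWithinAt (fun s => γ₁ (2*s - 1))
        ((2:ℝ) • ρ (γ₁ (2*t - 1)) (a₁ (2*t - 1))) (Icc (1/2:ℝ) 1) t :=
      (hγ₁ (2*t - 1) h2t).scomp t ((hd2' t).hasDerivWithinAt) maps₁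
    have key : ∀ s ∈ Icc (1/2:ℝ) 1, baseConcat γ₀ γ₁ s = γ₁ (2*s - 1) := by
      intro s hs
      simp only [baseConcat]
      by_cases h : s ≤ 1/2
      · rw [if_pos h]
        have hs2 : s = 1/2 := le_antisymm h hs.1
        subst hs2
        norm_num
        exact hmatch
      · rw [if_neg h]
    exact step.congr key (key t ht)
  have deriv : ∀ t ∈ Icc (0:ℝ) 1,
      HasDerivWithinAt (baseConcat γ₀ γ₁)
        (ρ (baseConcat γ₀ γ₁ t) (odot a₁ a₀ t)) (Icc (0:ℝ) 1) t := by
    intro t ht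
    rcases lt_trichotomy t (1/2) with hlt | heq | hgt
    · have hmem : Icc (0:ℝ) (1/2) ∈ nhdsWithin t (Icc (0:ℝ) 1) := by
        have h1 : Icc (0:ℝ) 1 ∩ Iio (1/2) ∈ nhdsWithin t (Icc (0:ℝ) 1) :=
          inter_mem_nhdsWithin _ (Iio_mem_nhds hlt)
        exact Filter.mem_of_superset h1 (fun s hs => ⟨hs.1.1, hs.2.le⟩)
      have h := ((left t ⟨ht.1, hlt.le⟩).mono_of_mem_nhdsWithin hmem)
      have heq2 : ρ (baseConcat γ₀ γ₁ t) (odot a₁ a₀ t)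
          = (2:ℝ) • ρ (γ₀ (2*t)) (a₀ (2*t)) := by
        simp only [baseConcat, odot, if_pos hlt.le, map_smul]
      rw [heq2]; exact h
    · subst heq
      have hL := left (1/2) ⟨by norm_num, le_refl _⟩
      have hR := right (1/2) ⟨le_refl _, by norm_num⟩
      have e1 : (2:ℝ)*(1/2:ℝ) = 1 := by norm_num
      have e2 : (2:ℝ)*(1/2:ℝ) - 1 = 0 := by norm_num
      rw [e1, h₀1, map_zero, smul_zero] at hL
      rw [e2, h₁0, map_zero, smul_zero] at hR
      have hunion := hL.union hR
      rw [Icc_union_Icc_eq_Icc (by norm_num : (0:ℝ) ≤ 1/2) (by norm_num : (1/2:ℝ) ≤ 1)]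
        at hunion
      have heq3 : ρ (baseConcat γ₀ γ₁ (1/2)) (odot a₁ a₀ (1/2)) = 0 := by
        simp only [odot, if_pos (le_refl (1/2:ℝ)), e1, h₀1, smul_zero, map_zero]
      rw [heq3]; exact hunion
    · have hmem : Icc (1/2:ℝ) 1 ∈ nhdsWithin t (Icc (0:ℝ) 1) := by
        have h1 : Icc (0:ℝ) 1 ∩ Ioi (1/2) ∈ nhdsWithin t (Icc (0:ℝ) 1) :=
          inter_mem_nhdsWithin _ (Ioi_mem_nhds hgt)
        exact Filter.mem_of_superset h1 (fun s hs => ⟨hs.2.le, hs.1.2⟩)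
      have h := ((right t ⟨hgt.le, ht.2⟩).mono_of_mem_nhdsWithin hmem)
      have heq2 : ρ (baseConcat γ₀ γ₁ t) (odot a₁ a₀ t)
          = (2:ℝ) • ρ (γ₁ (2*t - 1)) (a₁ (2*t - 1)) := by
        simp only [baseConcat, odot, if_neg (not_le.mpr hgt), map_smul]
      rw [heq2]; exact h
  refine ⟨deriv, ?_⟩
  -- continuity
  have hγcont : ContinuousOn (baseConcat γ₀ γ₁) (Icc (0:ℝ) 1) :=
    fun t ht => (deriv t ht).continuousWithinAt
  have haL : ContinuousOn (odot a₁ a₀) (Icc (0:ℝ) (1/2)) := by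
    have h0 : ContinuousOn (fun t : ℝ => (2:ℝ) • a₀ (2*t)) (Icc (0:ℝ) (1/2)) :=
      (ha₀.comp ((continuous_const.mul continuous_id).continuousOn) maps₀).const_smul (2:ℝ)
    exact h0.congr (fun s hs => by simp only [odot]; rw [if_pos hs.2])
  have haR : ContinuousOn (odot a₁ a₀) (Icc (1/2:ℝ) 1) := by
    have h1 : ContinuousOn (fun t : ℝ => (2:ℝ) • a₁ (2*t - 1)) (Icc (1/2:ℝ) 1) :=
      (ha₁.comp (((continuous_const.mul continuous_id).sub continuous_const).continuousOn)
        maps₁).const_smul (2:ℝ)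
    refine h1.congr (fun s hs => ?_)
    simp only [odot]
    by_cases h : s ≤ 1/2
    · rw [if_pos h]
      have hs2 : s = 1/2 := le_antisymm h hs.1
      subst hs2
      have e1 : (2:ℝ)*(1/2:ℝ) = 1 := by norm_num
      have e2 : (2:ℝ)*(1/2:ℝ) - 1 = 0 := by norm_num
      rw [e2, e1, h₀1, h₁0]
    · rw [if_neg h]
  have hacont : ContinuousOn (odot a₁ a₀) (Icc (0:ℝ) 1) := by
    intro t ht
    rcases lt_trichotomy t (1/2) with hlt | heq | hgt
    · have hmem : Icc (0:ℝ) (1/2) ∈ nhdsWithin t (Icc (0:ℝ) 1) := by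
        have h1 : Icc (0:ℝ) 1 ∩ Iio (1/2) ∈ nhdsWithin t (Icc (0:ℝ) 1) :=
          inter_mem_nhdsWithin _ (Iio_mem_nhds hlt)
        exact Filter.mem_of_superset h1 (fun s hs => ⟨hs.1.1, hs.2.le⟩)
      exact (haL t ⟨ht.1, hlt.le⟩).mono_of_mem_nhdsWithin hmem
    · subst heq
      have hu := (haL (1/2) ⟨by norm_num, le_refl _⟩).union
        (haR (1/2) ⟨le_refl _, by norm_num⟩)
      rwa [Icc_union_Icc_eq_Icc (by norm_num : (0:ℝ) ≤ 1/2)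
        (by norm_num : (1/2:ℝ) ≤ 1)] at hu
    · have hmem : Icc (1/2:ℝ) 1 ∈ nhdsWithin t (Icc (0:ℝ) 1) := by
        have h1 : Icc (0:ℝ) 1 ∩ Ioi (1/2) ∈ nhdsWithin t (Icc (0:ℝ) 1) :=
          inter_mem_nhdsWithin _ (Ioi_mem_nhds hgt)
        exact Filter.mem_of_superset h1 (fun s hs => ⟨hs.2.le, hs.1.2⟩)
      exact (haR t ⟨hgt.le, ht.2⟩).mono_of_mem_nhdsWithin hmem
  exact (hρ.comp_continuousOn hγcont).clm_apply hacont
end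
end
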